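/- Let (X_1, X_2) have the following mixture law with c_1 = 2 + √2: with probability 1/c_1 the vector is (U, 0) with U ~ Uniform(0,1]; with probability 1/c_1 it is (0, U) with U ~ Uniform(0,1]; and with probability √2/c_1 it is (V, V) where V has distribution function G_1. Then for every s ∈ (0,1), P(N_{s,2} = 1)/P(N_{s,2} ≥ 2) = √2 (1 − s)/(1 − G_1(s)), and P(N_{s,2} = 2 | N_{s,2} ≥ 2) = 1, so FD_{2,2} exists and is degenerate at 2; however, lim_{s↑1} P(N_{s,2} = 1 | N_{s,2} ≥ 1) does not exist, so FD_{2,1} does not exist. -/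

import Mathlib

open MeasureTheory Filter Set Topology Classical

/-- Conditional probability `P(A | B)` as a real number. -/
noncomputable def condP {Ω : Type*} [MeasurableSpace Ω] (μ : Measure Ω) (A B : Set Ω) : ℝ :=
  (μ (A ∩ B)).toReal / (μ B).toReal

/-- The density `g₁` on `[0,1]`. -/
noncomputable def g1 (y : ℝ) : ℝ :=
  if ∃ k : ℕ, 1 - 1 / 2 ^ k ≤ y ∧ y ≤ 1 - 3 / 2 ^ (k + 2) then 2 else 0

/-- The distribution function of `g₁`. -/
noncomputable def G1 (y : ℝ) : ℝ := ∫ t in (0:ℝ)..y, g1 t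

/-- The uniform distribution on `(0,1]`. -/
noncomputable def unif : Measure ℝ := volume.restrict (Set.Ioc 0 1)

/-- The law with density `g₁`. -/
noncomputable def nuG1 : Measure ℝ := volume.withDensity fun t => ENNReal.ofReal (g1 t)

/-- The mixture law of `(X₁, X₂)` with `c₁ = 2 + √2`. -/
noncomputable def law2 : Measure (ℝ × ℝ) :=
  ENNReal.ofReal (1 / (2 + Real.sqrt 2)) • Measure.map (fun u => (u, (0:ℝ))) unif +
  ENNReal.ofReal (1 / (2 + Real.sqrt 2)) • Measure.map (fun u => ((0:ℝ), u)) unif +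
  ENNReal.ofReal (Real.sqrt 2 / (2 + Real.sqrt 2)) • Measure.map (fun v => (v, v)) nuG1

open scoped ENNReal NNReal

/-- the k-th interval -/
def Ik (k : ℕ) : Set ℝ := Icc (1 - 1 / 2 ^ k) (1 - 3 / 2 ^ (k + 2))

def SS : Set ℝ := ⋃ k, Ik k

lemma g1_eq : g1 = Set.indicator SS (fun _ => (2:ℝ)) := by
  funext y
  unfold g1 SS Ik
  by_cases h : ∃ k : ℕ, 1 - 1 / 2 ^ k ≤ y ∧ y ≤ 1 - 3 / 2 ^ (k + 2)
  · rw [if_pos h, Set.indicator_of_mem]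
    simpa [Set.mem_iUnion, Set.mem_Icc] using h
  · rw [if_neg h, Set.indicator_of_notMem]
    simpa [Set.mem_iUnion, Set.mem_Icc] using h

lemma measurable_SS : MeasurableSet SS :=
  MeasurableSet.iUnion fun k => measurableSet_Icc

lemma measurable_g1 : Measurable g1 := by
  rw [g1_eq]; exact (measurable_const.indicator measurable_SS)

lemma pow_le_pow_nat {k l : ℕ} (h : k ≤ l) : (2:ℝ)^k ≤ 2^l :=
  pow_le_pow_right₀ one_le_two h

lemma bk_lt_al {k l : ℕ} (h : k < l) : (1 - 3 / 2 ^ (k + 2) : ℝ) < 1 - 1 / 2 ^ l := by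
  have hl : (0:ℝ) < 2^l := by positivity
  have hk : (0:ℝ) < 2^(k+2) := by positivity
  have key : (1:ℝ)/2^l < 3/2^(k+2) := by
    rw [div_lt_div_iff₀ hl hk]
    have h1 : (2:ℝ)^(k+2) ≤ 2^(l+1) := pow_le_pow_nat (by omega)
    have h2 : (2:ℝ)^(l+1) = 2*2^l := by ring
    nlinarith
  linarith

lemma Ik_disjoint : Pairwise (Function.onFun Disjoint (fun k => Ik k)) := by
  have key : ∀ k l : ℕ, k < l → Disjoint (Ik k) (Ik l) := by
    intro k l h
    apply Set.disjoint_left.2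
    intro x hx hx'
    have h1 : x ≤ 1 - 3 / 2 ^ (k + 2) := hx.2
    have h2 : 1 - 1 / 2 ^ l ≤ x := hx'.1
    linarith [bk_lt_al h]
  intro k l h
  rcases Nat.lt_or_ge k l with h' | h'
  · exact key k l h'
  · exact (key l k (by omega)).symm

lemma vol_Ik (k : ℕ) : volume (Ik k) = ENNReal.ofReal (1 / 2 ^ (k + 2)) := by
  rw [Ik, Real.volume_Icc]
  congr 1
  have : (2:ℝ)^(k+2) = 2^k * 4 := by ring
  rw [this]
  field_simp
  ring

lemma a_mono {k l : ℕ} (h : k ≤ l) : (1 - 1/2^k : ℝ) ≤ 1 - 1/2^l := by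
  have : (1:ℝ)/2^l ≤ 1/2^k :=
    one_div_le_one_div_of_le (by positivity) (pow_le_pow_nat h)
  linarith

lemma b_mono {k l : ℕ} (h : k ≤ l) : (1 - 3/2^(k+2) : ℝ) ≤ 1 - 3/2^(l+2) := by
  have h2 : (3:ℝ)/2^(l+2) ≤ 3/2^(k+2) := by
    rw [div_le_div_iff₀ (by positivity) (by positivity)]
    nlinarith [pow_le_pow_nat (show k+2 ≤ l+2 by omega),
      pow_pos (by norm_num : (0:ℝ) < 2) (k+2), pow_pos (by norm_num : (0:ℝ) < 2) (l+2)]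
  linarith

lemma ak_le_bk (k : ℕ) : (1 - 1/2^k : ℝ) ≤ 1 - 3/2^(k+2) := by
  have h1 : (3:ℝ)/2^(k+2) ≤ 1/2^k := by
    rw [div_le_div_iff₀ (by positivity) (by positivity)]
    have : (2:ℝ)^(k+2) = 4 * 2^k := by ring
    nlinarith [pow_pos (by norm_num : (0:ℝ) < 2) k]
  linarith

lemma bk_le_ak1 (k : ℕ) : (1 - 3/2^(k+2) : ℝ) ≤ 1 - 1/2^(k+1) := by
  have h1 : (1:ℝ)/2^(k+1) ≤ 3/2^(k+2) := by
    rw [div_le_div_iff₀ (by positivity) (by positivity)]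
    have : (2:ℝ)^(k+2) = 2 * 2^(k+1) := by ring
    nlinarith [pow_pos (by norm_num : (0:ℝ) < 2) (k+1)]
  linarith

lemma vol_SS_inter (s : ℝ) : volume (SS ∩ Ioi s) = ∑' k, volume (Ik k ∩ Ioi s) := by
  rw [SS, Set.iUnion_inter]
  exact measure_iUnion
    (Ik_disjoint.mono fun k l hd => hd.mono inter_subset_left inter_subset_left)
    (fun k => measurableSet_Icc.inter measurableSet_Ioi)

lemma vol_Ik_inter_of_le {k : ℕ} {s : ℝ} (hs : s ≤ 1 - 1/2^k) :
    volume (Ik k ∩ Ioi s) = ENNReal.ofReal (1/2^(k+2)) := by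
  apply le_antisymm
  · calc volume (Ik k ∩ Ioi s) ≤ volume (Ik k) := measure_mono inter_subset_left
    _ = _ := vol_Ik k
  · have hsub : Ioc (1 - 1/2^k) (1 - 3/2^(k+2)) ⊆ Ik k ∩ Ioi s := fun x hx =>
      ⟨⟨hx.1.le, hx.2⟩, lt_of_le_of_lt hs hx.1⟩
    calc ENNReal.ofReal (1/2^(k+2)) = volume (Ioc (1 - 1/2^k) (1 - 3/2^(k+2) : ℝ)) := by
          rw [Real.volume_Ioc]; congr 1
          have : (2:ℝ)^(k+2) = 2^k * 4 := by ring
          rw [this]; field_simp; ring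
      _ ≤ _ := measure_mono hsub

lemma vol_Ik_inter_of_ge {k : ℕ} {s : ℝ} (hs : 1 - 3/2^(k+2) ≤ s) :
    volume (Ik k ∩ Ioi s) = 0 := by
  have hsub : Ik k ∩ Ioi s ⊆ Ioc s (1 - 3/2^(k+2) : ℝ) := fun x hx => ⟨hx.2, hx.1.2⟩
  apply measure_mono_null hsub
  rw [Real.volume_Ioc, ENNReal.ofReal_eq_zero]
  linarith

lemma ofReal_pow_half (m : ℕ) : ENNReal.ofReal (1/2^m) = (2⁻¹ : ℝ≥0∞)^m := by
  rw [one_div, ← inv_pow, ENNReal.ofReal_pow (by norm_num : (0:ℝ) ≤ 2⁻¹)]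
  congr 1
  rw [ENNReal.ofReal_inv_of_pos (by norm_num : (0:ℝ) < 2)]
  norm_num [ENNReal.ofReal_ofNat]

lemma tsum_tail_half (c : ℕ) : ∑' n : ℕ, (2⁻¹ : ℝ≥0∞)^(n + c + 1) = 2⁻¹^c := by
  have h : ∀ n : ℕ, (2⁻¹ : ℝ≥0∞)^(n + c + 1) = 2⁻¹^(c+1) * 2⁻¹^n := by
    intro n; rw [← pow_add]; ring_nf
  simp_rw [h]
  rw [ENNReal.tsum_mul_left, ENNReal.tsum_geometric, ENNReal.one_sub_inv_two, inv_inv,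
    pow_succ, mul_assoc, ENNReal.inv_mul_cancel (by norm_num) (by norm_num), mul_one]

lemma tail_sum {K : ℕ} {s : ℝ} (h0 : ∀ k, k < K → volume (Ik k ∩ Ioi s) = 0)
    (h1 : ∀ k, K ≤ k → volume (Ik k ∩ Ioi s) = ENNReal.ofReal (1/2^(k+2))) :
    volume (SS ∩ Ioi s) = (2⁻¹ : ℝ≥0∞)^(K+1) := by
  rw [vol_SS_inter]
  set f : ℕ → ℝ≥0∞ := fun k => volume (Ik k ∩ Ioi s) with hf
  have hinj : Function.Injective (fun n : ℕ => n + K) := add_left_injective K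
  have hsupp : Function.support f ⊆ Set.range (fun n : ℕ => n + K) := by
    intro k hk
    rcases Nat.lt_or_ge k K with h | h
    · exact absurd (h0 k h) hk
    · exact ⟨k - K, by show k - K + K = k; omega⟩
  rw [← Function.Injective.tsum_eq hinj hsupp]
  have : ∀ n : ℕ, f (n + K) = (2⁻¹ : ℝ≥0∞)^(n + K + 2) := by
    intro n
    rw [hf]
    simp only
    rw [h1 (n + K) (by omega), ofReal_pow_half]
  simp_rw [this]
  exact tsum_tail_half (K+1)

lemma volA (K : ℕ) : volume (SS ∩ Ioi (1 - 1/2^K : ℝ)) = (2⁻¹ : ℝ≥0∞)^(K+1) := by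
  apply tail_sum
  · intro k hk
    exact vol_Ik_inter_of_ge ((bk_le_ak1 k).trans (a_mono (by omega)))
  · intro k hk
    exact vol_Ik_inter_of_le (a_mono hk)

lemma volB (K : ℕ) : volume (SS ∩ Ioi (1 - 3/2^(K+2) : ℝ)) = (2⁻¹ : ℝ≥0∞)^(K+2) := by
  have : K + 2 = (K+1) + 1 := rfl
  rw [this]
  apply tail_sum
  · intro k hk
    exact vol_Ik_inter_of_ge (b_mono (by omega))
  · intro k hk
    exact vol_Ik_inter_of_le (le_trans (bk_le_ak1 K) (a_mono (by omega)))

lemma SS_subset_Icc : SS ⊆ Icc (0:ℝ) 1 := by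
  intro x hx
  obtain ⟨k, hk⟩ := Set.mem_iUnion.1 hx
  have h1 : (1:ℝ)/2^k ≤ 1 := by
    rw [div_le_one (by positivity)]
    exact one_le_pow₀ one_le_two
  have h2 : (0:ℝ) < 3/2^(k+2) := by positivity
  exact ⟨by linarith [hk.1], by linarith [hk.2]⟩

lemma vol_SS_Ioi0 : volume (SS ∩ Ioi (0:ℝ)) = 2⁻¹ := by
  have h := volA 0
  norm_num at h
  exact h

lemma vol_split {s : ℝ} (hs : 0 < s) :
    volume (SS ∩ Ioc 0 s) + volume (SS ∩ Ioi s) = 2⁻¹ := by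
  rw [← vol_SS_Ioi0]
  rw [← measure_union
    (Set.disjoint_left.2 fun x hx hx' => absurd hx'.2 (not_lt.2 hx.2.2))
    (measurable_SS.inter measurableSet_Ioi)]
  congr 1
  rw [← Set.inter_union_distrib_left, Set.Ioc_union_Ioi_eq_Ioi hs.le]

lemma nuG1_Ioi (s : ℝ) : nuG1 (Ioi s) = 2 * volume (SS ∩ Ioi s) := by
  rw [nuG1, withDensity_apply _ measurableSet_Ioi]
  have h : ∀ t, ENNReal.ofReal (g1 t) = SS.indicator (fun _ => (2:ℝ≥0∞)) t := by
    intro t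
    rw [g1_eq]
    by_cases ht : t ∈ SS <;> simp [ht]
  simp_rw [h]
  rw [lintegral_indicator measurable_SS, setLIntegral_const,
    Measure.restrict_apply measurable_SS]

lemma nuG1_Ioi_ne_top (s : ℝ) : nuG1 (Ioi s) ≠ ⊤ := by
  rw [nuG1_Ioi]
  have h : volume (SS ∩ Ioi s) ≤ volume (Icc (0:ℝ) 1) :=
    measure_mono (Set.inter_subset_left.trans SS_subset_Icc)
  rw [Real.volume_Icc] at h
  exact ((ENNReal.mul_le_mul_iff_right (by norm_num) (by norm_num)).2 h).trans_lt
    (by norm_num) |>.ne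

lemma G1_eq {s : ℝ} (hs : 0 ≤ s) : G1 s = 2 * (volume (SS ∩ Ioc 0 s)).toReal := by
  rw [G1, intervalIntegral.integral_of_le hs, g1_eq,
    setIntegral_indicator measurable_SS, setIntegral_const, smul_eq_mul, mul_comm,
    Set.inter_comm]
  rfl

lemma one_sub_G1 {s : ℝ} (hs : 0 < s) : 1 - G1 s = (nuG1 (Ioi s)).toReal := by
  have hsplit := vol_split hs
  have hA : volume (SS ∩ Ioc 0 s) ≠ ⊤ := by
    refine (le_trans ?_ hsplit.le).trans_lt (by norm_num) |>.ne
    exact le_add_right le_rfl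
  have hB : volume (SS ∩ Ioi s) ≠ ⊤ := by
    refine (le_trans ?_ hsplit.le).trans_lt (by norm_num) |>.ne
    exact le_add_left le_rfl
  have h := congrArg ENNReal.toReal hsplit
  rw [ENNReal.toReal_add hA hB] at h
  have h2 : ((2⁻¹ : ℝ≥0∞)).toReal = 1/2 := by simp
  rw [h2] at h
  rw [G1_eq hs.le, nuG1_Ioi, ENNReal.toReal_mul]
  have h3 : ((2 : ℝ≥0∞)).toReal = 2 := by simp
  rw [h3]
  linarith

lemma HH_pos {s : ℝ} (hs : s < 1) : 0 < (nuG1 (Ioi s)).toReal := by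
  obtain ⟨K, hK⟩ := exists_pow_lt_of_lt_one (sub_pos.2 hs) (by norm_num : (1:ℝ)/2 < 1)
  have hK' : (1:ℝ)/2^K < 1 - s := by
    calc (1:ℝ)/2^K = (1/2)^K := by rw [div_pow, one_pow]
    _ < 1 - s := hK
  have hsub : Ik K ⊆ SS ∩ Ioi s := by
    intro x hx
    exact ⟨Set.mem_iUnion.2 ⟨K, hx⟩, lt_of_lt_of_le (by linarith [(show (1:ℝ) - 1/2^K ≤ x from hx.1)] : s < x) le_rfl⟩
  have hvol : ENNReal.ofReal (1/2^(K+2)) ≤ volume (SS ∩ Ioi s) := by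
    rw [← vol_Ik K]; exact measure_mono hsub
  apply ENNReal.toReal_pos
  · rw [nuG1_Ioi]
    intro hcon
    rw [mul_eq_zero] at hcon
    rcases hcon with h | h
    · norm_num at h
    · rw [h] at hvol
      simp only [nonpos_iff_eq_zero, ENNReal.ofReal_eq_zero] at hvol
      have : (0:ℝ) < 1/2^(K+2) := by positivity
      linarith
  · exact nuG1_Ioi_ne_top s

lemma toReal_pow_half (m : ℕ) : ((2⁻¹ : ℝ≥0∞)^m).toReal = 1/2^m := by
  rw [ENNReal.toReal_pow]
  simp [ENNReal.toReal_inv, inv_pow, one_div]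

lemma HH_at_a (K : ℕ) : (nuG1 (Ioi (1 - 1/2^K : ℝ))).toReal = 1/2^K := by
  rw [nuG1_Ioi, volA, ENNReal.toReal_mul, toReal_pow_half]
  have : ((2 : ℝ≥0∞)).toReal = 2 := by simp
  rw [this, pow_succ]
  field_simp

lemma HH_at_b (K : ℕ) : (nuG1 (Ioi (1 - 3/2^(K+2) : ℝ))).toReal = 1/2^(K+1) := by
  rw [nuG1_Ioi, volB, ENNReal.toReal_mul, toReal_pow_half]
  have : ((2 : ℝ≥0∞)).toReal = 2 := by simp
  rw [this]
  have : (2:ℝ)^(K+2) = 2^(K+1) * 2 := by ring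
  rw [this]
  field_simp

lemma unif_Ioi {s : ℝ} (hs : 0 ≤ s) : unif (Ioi s) = ENNReal.ofReal (1 - s) := by
  rw [unif, Measure.restrict_apply measurableSet_Ioi]
  have h : Ioi s ∩ Ioc 0 1 = Ioc s 1 := by
    ext x
    simp only [mem_inter_iff, mem_Ioi, mem_Ioc]
    constructor
    · rintro ⟨h1, _, h3⟩; exact ⟨h1, h3⟩
    · rintro ⟨h1, h2⟩; exact ⟨h1, lt_of_le_of_lt hs h1, h2⟩
  rw [h, Real.volume_Ioc]

lemma law2_apply {B : Set (ℝ × ℝ)} (hB : MeasurableSet B) :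
    law2 B = ENNReal.ofReal (1 / (2 + Real.sqrt 2)) * unif ((fun u => (u, (0:ℝ))) ⁻¹' B)
      + ENNReal.ofReal (1 / (2 + Real.sqrt 2)) * unif ((fun u => ((0:ℝ), u)) ⁻¹' B)
      + ENNReal.ofReal (Real.sqrt 2 / (2 + Real.sqrt 2)) * nuG1 ((fun v => (v, v)) ⁻¹' B) := by
  rw [law2, Measure.add_apply, Measure.add_apply, Measure.smul_apply, Measure.smul_apply,
    Measure.smul_apply,
    Measure.map_apply (show Measurable fun u : ℝ => (u, (0:ℝ)) from
      measurable_id.prodMk measurable_const) hB,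
    Measure.map_apply (show Measurable fun u : ℝ => ((0:ℝ), u) from
      measurable_const.prodMk measurable_id) hB,
    Measure.map_apply (show Measurable fun v : ℝ => (v, v) from
      measurable_id.prodMk measurable_id) hB,
    smul_eq_mul, smul_eq_mul, smul_eq_mul]

lemma meas_fst {s : ℝ} : MeasurableSet {p : ℝ × ℝ | s < p.1} :=
  measurable_fst measurableSet_Ioi

lemma meas_snd {s : ℝ} : MeasurableSet {p : ℝ × ℝ | s < p.2} :=
  measurable_snd measurableSet_Ioi

lemma law2_B2 {s : ℝ} (hs0 : 0 < s) :
    law2 {p : ℝ × ℝ | s < p.1 ∧ s < p.2} =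
      ENNReal.ofReal (Real.sqrt 2 / (2 + Real.sqrt 2)) * nuG1 (Ioi s) := by
  rw [law2_apply (show MeasurableSet {p : ℝ × ℝ | s < p.1 ∧ s < p.2} from meas_fst.inter meas_snd)]
  have e1 : (fun u : ℝ => (u, (0:ℝ))) ⁻¹' {p : ℝ × ℝ | s < p.1 ∧ s < p.2} = ∅ := by
    ext u; simp only [mem_preimage, mem_setOf_eq, mem_empty_iff_false, iff_false]
    rintro ⟨-, h⟩; exact absurd h (not_lt.2 hs0.le)
  have e2 : (fun u : ℝ => ((0:ℝ), u)) ⁻¹' {p : ℝ × ℝ | s < p.1 ∧ s < p.2} = ∅ := by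
    ext u; simp only [mem_preimage, mem_setOf_eq, mem_empty_iff_false, iff_false]
    rintro ⟨h, -⟩; exact absurd h (not_lt.2 hs0.le)
  have e3 : (fun v : ℝ => (v, v)) ⁻¹' {p : ℝ × ℝ | s < p.1 ∧ s < p.2} = Ioi s := by
    ext v; simp only [mem_preimage, mem_setOf_eq, mem_Ioi, and_self]
  rw [e1, e2, e3]
  simp

lemma law2_B1 {s : ℝ} (hs0 : 0 < s) :
    law2 {p : ℝ × ℝ | (s < p.1 ∧ ¬ s < p.2) ∨ (¬ s < p.1 ∧ s < p.2)} =
      ENNReal.ofReal (1 / (2 + Real.sqrt 2)) * ENNReal.ofReal (1 - s)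
      + ENNReal.ofReal (1 / (2 + Real.sqrt 2)) * ENNReal.ofReal (1 - s) := by
  have hmeas : MeasurableSet {p : ℝ × ℝ | (s < p.1 ∧ ¬ s < p.2) ∨ (¬ s < p.1 ∧ s < p.2)} :=
    (show MeasurableSet _ from (meas_fst.inter meas_snd.compl).union (meas_fst.compl.inter meas_snd))
  rw [law2_apply hmeas]
  have e1 : (fun u : ℝ => (u, (0:ℝ))) ⁻¹'
      {p : ℝ × ℝ | (s < p.1 ∧ ¬ s < p.2) ∨ (¬ s < p.1 ∧ s < p.2)} = Ioi s := by
    ext u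
    simp only [mem_preimage, mem_setOf_eq, mem_Ioi]
    have h0 : ¬ s < (0:ℝ) := not_lt.2 hs0.le
    tauto
  have e2 : (fun u : ℝ => ((0:ℝ), u)) ⁻¹'
      {p : ℝ × ℝ | (s < p.1 ∧ ¬ s < p.2) ∨ (¬ s < p.1 ∧ s < p.2)} = Ioi s := by
    ext u
    simp only [mem_preimage, mem_setOf_eq, mem_Ioi]
    have h0 : ¬ s < (0:ℝ) := not_lt.2 hs0.le
    tauto
  have e3 : (fun v : ℝ => (v, v)) ⁻¹'
      {p : ℝ × ℝ | (s < p.1 ∧ ¬ s < p.2) ∨ (¬ s < p.1 ∧ s < p.2)} = ∅ := by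
    ext v
    simp only [mem_preimage, mem_setOf_eq, mem_empty_iff_false, iff_false]
    tauto
  rw [e1, e2, e3, unif_Ioi hs0.le]
  simp

lemma law2_Bge1 {s : ℝ} (hs0 : 0 < s) :
    law2 {p : ℝ × ℝ | s < p.1 ∨ s < p.2} =
      ENNReal.ofReal (1 / (2 + Real.sqrt 2)) * ENNReal.ofReal (1 - s)
      + ENNReal.ofReal (1 / (2 + Real.sqrt 2)) * ENNReal.ofReal (1 - s)
      + ENNReal.ofReal (Real.sqrt 2 / (2 + Real.sqrt 2)) * nuG1 (Ioi s) := by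
  rw [law2_apply (show MeasurableSet {p : ℝ × ℝ | s < p.1 ∨ s < p.2} from meas_fst.union meas_snd)]
  have h0 : ¬ s < (0:ℝ) := not_lt.2 hs0.le
  have e1 : (fun u : ℝ => (u, (0:ℝ))) ⁻¹' {p : ℝ × ℝ | s < p.1 ∨ s < p.2} = Ioi s := by
    ext u; simp only [mem_preimage, mem_setOf_eq, mem_Ioi]; tauto
  have e2 : (fun u : ℝ => ((0:ℝ), u)) ⁻¹' {p : ℝ × ℝ | s < p.1 ∨ s < p.2} = Ioi s := by
    ext u; simp only [mem_preimage, mem_setOf_eq, mem_Ioi]; tauto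
  have e3 : (fun v : ℝ => (v, v)) ⁻¹' {p : ℝ × ℝ | s < p.1 ∨ s < p.2} = Ioi s := by
    ext v; simp only [mem_preimage, mem_setOf_eq, mem_Ioi, or_self]
  rw [e1, e2, e3, unif_Ioi hs0.le]

lemma cancel_c {c x H : ℝ} (hc : c ≠ 0) :
    (2*(x/c)) / (2*(x/c) + (Real.sqrt 2/c)*H) = (2*x) / (2*x + Real.sqrt 2*H) := by
  have e1 : 2*(x/c) = (2*x)/c := by ring
  have e2 : (Real.sqrt 2/c)*H = (Real.sqrt 2*H)/c := by ring
  rw [e1, e2, ← add_div, div_div_div_cancel_right₀ hc]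


/-- Under the mixture law `law2`:
`P(N_{s,2}=1)/P(N_{s,2}≥2) = √2(1-s)/(1-G₁(s))` for `s ∈ (0,1)`,
`P(N_{s,2}=2 | N_{s,2}≥2) = 1` (so `FD_{2,2}` exists, degenerate at 2), but
`lim_{s↑1} P(N_{s,2}=1 | N_{s,2}≥1)` does not exist (so `FD_{2,1}` does not exist). -/
theorem stmt3 {Ω : Type*} [MeasurableSpace Ω] (μ : Measure Ω) [IsProbabilityMeasure μ]
    (X1 X2 : Ω → ℝ) (h1 : Measurable X1) (h2 : Measurable X2)
    (hlaw : Measure.map (fun ω => (X1 ω, X2 ω)) μ = law2)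
    (N : ℝ → Ω → ℕ)
    (hN : ∀ s ω, N s ω = (if s < X1 ω then 1 else 0) + (if s < X2 ω then 1 else 0)) :
    (∀ s ∈ Set.Ioo (0:ℝ) 1,
      (μ {ω | N s ω = 1}).toReal / (μ {ω | 2 ≤ N s ω}).toReal =
        Real.sqrt 2 * (1 - s) / (1 - G1 s) ∧
      condP μ {ω | N s ω = 2} {ω | 2 ≤ N s ω} = 1) ∧
    Tendsto (fun s => condP μ {ω | N s ω = 2} {ω | 2 ≤ N s ω}) (𝓝[<] (1:ℝ)) (𝓝 1) ∧
    ¬ ∃ L : ℝ, Tendsto (fun s => condP μ {ω | N s ω = 1} {ω | 1 ≤ N s ω})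
        (𝓝[<] (1:ℝ)) (𝓝 L) := by
  have hsq : (0:ℝ) < Real.sqrt 2 := Real.sqrt_pos.2 (by norm_num)
  have hsq2 : Real.sqrt 2 * Real.sqrt 2 = 2 := Real.mul_self_sqrt (by norm_num)
  have hc : (0:ℝ) < 2 + Real.sqrt 2 := by linarith
  have hμB : ∀ B : Set (ℝ × ℝ), MeasurableSet B →
      μ ((fun ω => (X1 ω, X2 ω)) ⁻¹' B) = law2 B := by
    intro B hB
    rw [← Measure.map_apply (h1.prodMk h2) hB, hlaw]
  -- set identities
  have hset2 : ∀ s : ℝ, {ω | N s ω = 2} =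
      (fun ω => (X1 ω, X2 ω)) ⁻¹' {p : ℝ × ℝ | s < p.1 ∧ s < p.2} := by
    intro s; ext ω
    simp only [mem_setOf_eq, mem_preimage, hN]
    by_cases hA : s < X1 ω <;> by_cases hB : s < X2 ω <;> simp [hA, hB]
  have hsetge2 : ∀ s : ℝ, {ω | 2 ≤ N s ω} =
      (fun ω => (X1 ω, X2 ω)) ⁻¹' {p : ℝ × ℝ | s < p.1 ∧ s < p.2} := by
    intro s; ext ω
    simp only [mem_setOf_eq, mem_preimage, hN]
    by_cases hA : s < X1 ω <;> by_cases hB : s < X2 ω <;> simp [hA, hB]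
  have hset1 : ∀ s : ℝ, {ω | N s ω = 1} =
      (fun ω => (X1 ω, X2 ω)) ⁻¹'
        {p : ℝ × ℝ | (s < p.1 ∧ ¬ s < p.2) ∨ (¬ s < p.1 ∧ s < p.2)} := by
    intro s; ext ω
    simp only [mem_setOf_eq, mem_preimage, hN]
    by_cases hA : s < X1 ω <;> by_cases hB : s < X2 ω <;> simp [hA, hB]
  have hsetge1 : ∀ s : ℝ, {ω | 1 ≤ N s ω} =
      (fun ω => (X1 ω, X2 ω)) ⁻¹' {p : ℝ × ℝ | s < p.1 ∨ s < p.2} := by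
    intro s; ext ω
    simp only [mem_setOf_eq, mem_preimage, hN]
    by_cases hA : s < X1 ω <;> by_cases hB : s < X2 ω <;> simp [hA, hB]
  -- numeric values
  have hval2 : ∀ s ∈ Ioo (0:ℝ) 1, (μ {ω | 2 ≤ N s ω}).toReal =
      (Real.sqrt 2 / (2 + Real.sqrt 2)) * (nuG1 (Ioi s)).toReal := by
    intro s hs
    rw [hsetge2 s, hμB _ (show MeasurableSet {p : ℝ × ℝ | s < p.1 ∧ s < p.2} from
      meas_fst.inter meas_snd), law2_B2 hs.1, ENNReal.toReal_mul,
      ENNReal.toReal_ofReal (by positivity)]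
  have hval1 : ∀ s ∈ Ioo (0:ℝ) 1, (μ {ω | N s ω = 1}).toReal =
      2 * ((1 - s) / (2 + Real.sqrt 2)) := by
    intro s hs
    rw [hset1 s, hμB _ (show MeasurableSet
        {p : ℝ × ℝ | (s < p.1 ∧ ¬ s < p.2) ∨ (¬ s < p.1 ∧ s < p.2)} from
      (meas_fst.inter meas_snd.compl).union (meas_fst.compl.inter meas_snd)),
      law2_B1 hs.1,
      ENNReal.toReal_add (ENNReal.mul_ne_top ENNReal.ofReal_ne_top ENNReal.ofReal_ne_top)
        (ENNReal.mul_ne_top ENNReal.ofReal_ne_top ENNReal.ofReal_ne_top),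
      ENNReal.toReal_mul, ENNReal.toReal_ofReal (by positivity),
      ENNReal.toReal_ofReal (by linarith [hs.2] : (0:ℝ) ≤ 1 - s)]
    ring
  have hvalge1 : ∀ s ∈ Ioo (0:ℝ) 1, (μ {ω | 1 ≤ N s ω}).toReal =
      2 * ((1 - s) / (2 + Real.sqrt 2))
        + (Real.sqrt 2 / (2 + Real.sqrt 2)) * (nuG1 (Ioi s)).toReal := by
    intro s hs
    rw [hsetge1 s, hμB _ (show MeasurableSet {p : ℝ × ℝ | s < p.1 ∨ s < p.2} from
      meas_fst.union meas_snd), law2_Bge1 hs.1,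
      ENNReal.toReal_add (ENNReal.add_ne_top.2
        ⟨ENNReal.mul_ne_top ENNReal.ofReal_ne_top ENNReal.ofReal_ne_top,
         ENNReal.mul_ne_top ENNReal.ofReal_ne_top ENNReal.ofReal_ne_top⟩)
        (ENNReal.mul_ne_top ENNReal.ofReal_ne_top (nuG1_Ioi_ne_top s)),
      ENNReal.toReal_add (ENNReal.mul_ne_top ENNReal.ofReal_ne_top ENNReal.ofReal_ne_top)
        (ENNReal.mul_ne_top ENNReal.ofReal_ne_top ENNReal.ofReal_ne_top),
      ENNReal.toReal_mul, ENNReal.toReal_mul,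
      ENNReal.toReal_ofReal (by positivity : (0:ℝ) ≤ 1 / (2 + Real.sqrt 2)),
      ENNReal.toReal_ofReal (by linarith [hs.2] : (0:ℝ) ≤ 1 - s),
      ENNReal.toReal_ofReal (by positivity : (0:ℝ) ≤ Real.sqrt 2 / (2 + Real.sqrt 2))]
    ring
  -- first bullet
  have main : ∀ s ∈ Ioo (0:ℝ) 1,
      (μ {ω | N s ω = 1}).toReal / (μ {ω | 2 ≤ N s ω}).toReal =
        Real.sqrt 2 * (1 - s) / (1 - G1 s) ∧
      condP μ {ω | N s ω = 2} {ω | 2 ≤ N s ω} = 1 := by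
    intro s hs
    have hH := HH_pos hs.2
    constructor
    · rw [hval1 s hs, hval2 s hs, one_sub_G1 hs.1]
      rw [div_eq_div_iff (mul_pos (by positivity : (0:ℝ) < Real.sqrt 2 / (2 + Real.sqrt 2)) hH).ne' hH.ne']
      linear_combination (-(1-s)*(nuG1 (Ioi s)).toReal/(2+Real.sqrt 2)) * hsq2
    · have hAB : {ω | N s ω = 2} = {ω | 2 ≤ N s ω} := by rw [hset2, hsetge2]
      rw [condP, hAB, Set.inter_self]
      apply div_self
      rw [hval2 s hs]
      positivity
  refine ⟨main, ?_, ?_⟩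
  · have hmem : Ioo (0:ℝ) 1 ∈ 𝓝[<] (1:ℝ) :=
      Ioo_mem_nhdsLT_of_mem (by constructor <;> norm_num)
    exact tendsto_const_nhds.congr'
      ((eventually_of_mem hmem fun s hs => ((main s hs).2).symm))
  · rintro ⟨L, hL⟩
    set f := fun s => condP μ {ω | N s ω = 1} {ω | 1 ≤ N s ω} with hfdef
    have hf : ∀ s ∈ Ioo (0:ℝ) 1, f s =
        (2 * ((1 - s) / (2 + Real.sqrt 2))) /
          (2 * ((1 - s) / (2 + Real.sqrt 2))
            + (Real.sqrt 2 / (2 + Real.sqrt 2)) * (nuG1 (Ioi s)).toReal) := by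
      intro s hs
      have hsub : {ω | N s ω = 1} ∩ {ω | 1 ≤ N s ω} = {ω | N s ω = 1} :=
        Set.inter_eq_left.2 fun ω h => by
          simp only [mem_setOf_eq] at h ⊢; omega
      rw [hfdef]
      simp only [condP]
      rw [hsub, hval1 s hs, hvalge1 s hs]
    -- sequence a: s = 1 - 1/2^(K+1)
    have hbase : Tendsto (fun K : ℕ => ((1:ℝ)/2)^K) atTop (𝓝 0) :=
      tendsto_pow_atTop_nhds_zero_of_lt_one (by norm_num) (by norm_num)
    have hpowK : ∀ m : ℕ, ((1:ℝ)/2)^m = 1/2^m := fun m => by rw [div_pow, one_pow]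
    have htendA : Tendsto (fun K : ℕ => (1 - 1/2^(K+1) : ℝ)) atTop (𝓝[<] 1) := by
      apply tendsto_nhdsWithin_of_tendsto_nhds_of_eventually_within
      · have h' : Tendsto (fun K : ℕ => ((1:ℝ)/2)^(K+1)) atTop (𝓝 0) :=
          hbase.comp (tendsto_add_atTop_nat 1)
        have h'' : Tendsto (fun K : ℕ => (1/2^(K+1) : ℝ)) atTop (𝓝 0) := by
          simpa only [hpowK] using h'
        simpa using h''.const_sub 1
      · filter_upwards with K
        have : (0:ℝ) < 1/2^(K+1) := by positivity
        simp only [mem_Iio]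
        linarith
    have htendB : Tendsto (fun K : ℕ => (1 - 3/2^(K+2) : ℝ)) atTop (𝓝[<] 1) := by
      apply tendsto_nhdsWithin_of_tendsto_nhds_of_eventually_within
      · have h' : Tendsto (fun K : ℕ => ((1:ℝ)/2)^(K+2)) atTop (𝓝 0) :=
          hbase.comp (tendsto_add_atTop_nat 2)
        have h3 : Tendsto (fun K : ℕ => (3/2^(K+2) : ℝ)) atTop (𝓝 0) := by
          have := h'.const_mul (3:ℝ)
          simp only [hpowK] at this
          simpa [mul_one_div, div_eq_mul_inv] using this
        simpa using h3.const_sub 1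
      · filter_upwards with K
        have : (0:ℝ) < 3/2^(K+2) := by positivity
        simp only [mem_Iio]
        linarith
    have hmemA : ∀ K : ℕ, (1 - 1/2^(K+1) : ℝ) ∈ Ioo (0:ℝ) 1 := by
      intro K
      have h1' : (1:ℝ)/2^(K+1) ≤ 1/2 := by
        apply one_div_le_one_div_of_le (by norm_num)
        calc (2:ℝ) = 2^1 := (pow_one 2).symm
        _ ≤ 2^(K+1) := pow_le_pow_nat (by omega)
      have h2' : (0:ℝ) < 1/2^(K+1) := by positivity
      exact ⟨by linarith, by linarith⟩
    have hmemB : ∀ K : ℕ, (1 - 3/2^(K+2) : ℝ) ∈ Ioo (0:ℝ) 1 := by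
      intro K
      have h1' : (3:ℝ)/2^(K+2) ≤ 3/4 := by
        apply div_le_div_of_nonneg_left (by norm_num) (by norm_num)
        calc (4:ℝ) = 2^2 := by norm_num
        _ ≤ 2^(K+2) := pow_le_pow_nat (by omega)
      have h2' : (0:ℝ) < 3/2^(K+2) := by positivity
      exact ⟨by linarith, by linarith⟩
    have hfa : ∀ K : ℕ, f (1 - 1/2^(K+1)) = 2 / (2 + Real.sqrt 2) := by
      intro K
      rw [hf _ (hmemA K), HH_at_a (K+1)]
      have he : (0:ℝ) < 1/2^(K+1) := by positivity
      have hrw : (1 : ℝ) - (1 - 1/2^(K+1)) = 1/2^(K+1) := by ring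
      rw [hrw, cancel_c hc.ne']
      rw [show (2:ℝ)*(1/2^(K+1)) + Real.sqrt 2*(1/2^(K+1)) = (2+Real.sqrt 2)*(1/2^(K+1))
        from by ring,
        show (2:ℝ)*(1/2^(K+1)) = 2*(1/2^(K+1)) from rfl]
      rw [mul_div_mul_right _ _ he.ne']
    have hfb : ∀ K : ℕ, f (1 - 3/2^(K+2)) = 6 / (6 + 2 * Real.sqrt 2) := by
      intro K
      rw [hf _ (hmemB K), HH_at_b K]
      have ht : (0:ℝ) < 1/2^(K+2) := by positivity
      have hrw : (1 : ℝ) - (1 - 3/2^(K+2)) = 3/2^(K+2) := by ring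
      have h21 : (1:ℝ)/2^(K+1) = 2*(1/2^(K+2)) := by
        rw [show (2:ℝ)^(K+2) = 2^(K+1)*2 from by ring]
        field_simp
      rw [hrw, cancel_c hc.ne', h21]
      rw [show (2:ℝ)*(3/2^(K+2)) = 6*(1/2^(K+2)) from by ring,
        show (6:ℝ)*(1/2^(K+2)) + Real.sqrt 2*(2*(1/2^(K+2))) =
          (6+2*Real.sqrt 2)*(1/2^(K+2)) from by ring]
      rw [mul_div_mul_right _ _ ht.ne']
    have hLa : L = 2 / (2 + Real.sqrt 2) :=
      tendsto_nhds_unique ((hL.comp htendA).congr fun K => hfa K) tendsto_const_nhds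
    have hLb : L = 6 / (6 + 2 * Real.sqrt 2) :=
      tendsto_nhds_unique ((hL.comp htendB).congr fun K => hfb K) tendsto_const_nhds
    have heq : (2:ℝ) / (2 + Real.sqrt 2) = 6 / (6 + 2*Real.sqrt 2) := hLa.symm.trans hLb
    have h6 : (0:ℝ) < 6 + 2*Real.sqrt 2 := by linarith
    rw [div_eq_div_iff hc.ne' h6.ne'] at heq
    ring_nf at heq
    nlinarith [hsq]
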